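/- Let A be a bialgebra over a commutative ring k. The pair of k-module maps φ⁰ = Δ : A → A ⊗ A and φ¹ = (id_A ⊗ η) : A ≅ A ⊗ k → A ⊗ A forms a contractible (split) equalizer with equalizer η : k → A; the contracting maps are ε ⊗ id : A ⊗ A → A and ε : A → k. In particular, the coinvariants of A regarded as a Hopf module over itself, {a ∈ A | Δ(a) = a ⊗ 1}, equal the image of the unit η : k → A. -/
import Mathlib


open TensorProduct

variable (k : Type) [CommRing k] (A : Type) [Ring A] [Bialgebra k A]

/-- The contracting map `ε ⊗ id : A ⊗ A → A`, `a ⊗ b ↦ ε(a) • b`. -/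
noncomputable def contractU : TensorProduct k A A →ₗ[k] A :=
  TensorProduct.lift ((LinearMap.lsmul k A) ∘ₗ (Coalgebra.counit (R := k) (A := A)))

lemma contractU_eq (x : TensorProduct k A A) :
    contractU k A x = TensorProduct.lid k A ((Coalgebra.counit (R := k)).rTensor A x) := by
  induction x using TensorProduct.induction_on with
  | zero => simp
  | tmul a b => simp [contractU]
  | add x y hx hy => simp [map_add, hx, hy]

lemma comul_algebraMap' (x : k) :
    Coalgebra.comul (R := k) (algebraMap k A x) = (algebraMap k A x) ⊗ₜ[k] (1 : A) := by
  rw [Bialgebra.comul_algebraMap, Algebra.algebraMap_eq_smul_one,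
    Algebra.TensorProduct.one_def, TensorProduct.smul_tmul',
    Algebra.algebraMap_eq_smul_one]

/-- For a bialgebra `A` over `k`, the pair `φ⁰ = Δ` and `φ¹ = (id ⊗ η) : a ↦ a ⊗ 1`
forms a split (contractible) equalizer with equalizer the unit `η : k → A` and
contracting maps `ε ⊗ id : A ⊗ A → A` and `ε : A → k`.  In particular the Hopf
module coinvariants `{a | Δ a = a ⊗ 1}` of `A` equal the image of the unit. -/
theorem stmt14 :
    (∀ x : k, Coalgebra.counit (R := k) (algebraMap k A x) = x) ∧
    (∀ x : k, Coalgebra.comul (R := k) (algebraMap k A x) =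
      (algebraMap k A x) ⊗ₜ[k] (1 : A)) ∧
    (∀ a : A, contractU k A (Coalgebra.comul a) = a) ∧
    (∀ a : A, contractU k A (a ⊗ₜ[k] (1 : A)) =
      algebraMap k A (Coalgebra.counit a)) ∧
    {a : A | Coalgebra.comul (R := k) a = a ⊗ₜ[k] (1 : A)} =
      Set.range (algebraMap k A) := by
  refine ⟨fun x => Bialgebra.counit_algebraMap x, comul_algebraMap' k A, ?_, ?_, ?_⟩
  · intro a
    rw [contractU_eq, Coalgebra.rTensor_counit_comul]
    simp
  · intro a
    simp [contractU, Algebra.algebraMap_eq_smul_one]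
  · ext a
    constructor
    · intro ha
      have := congrArg (fun x => TensorProduct.lid k A
        ((Coalgebra.counit (R := k)).rTensor A x)) ha
      simp only [Coalgebra.rTensor_counit_comul, LinearMap.rTensor_tmul,
        TensorProduct.lid_tmul, one_smul] at this
      exact ⟨Coalgebra.counit a, by rw [Algebra.algebraMap_eq_smul_one]; exact this.symm⟩
    · rintro ⟨x, rfl⟩
      exact comul_algebraMap' k A x
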